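/- Fix positive integers L ≥ 2 and T. The set of functions realizable as a linear layer composed with Reversible Instance Normalisation — i.e., functions of the form f(x) = μ(x)·1_T + σ(x)·(β·1_T + α·(A·R(x) + c)) where R(x) = (1/α)·((x − μ(x)·1_L)/σ(x) − β·1_L), defined for x ∈ ℝ^L with σ(x) > 0, where A ranges over T×L real matrices, c over ℝ^T, and the RevIN affine parameters range over α ∈ ℝ \ {0} and β ∈ ℝ — is exactly equal to the set of functions of the form x ↦ Ã·x + σ(x)·b, where b ∈ ℝ^T and Ã is a T×L real matrix each of whose rows sums to 1. -/

import Mathlib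

/-- The mean of the components of `x ∈ ℝ^L`. -/
noncomputable def mea (L : ℕ) (x : Fin L → ℝ) : ℝ := (∑ i, x i) / L

/-- The (population) standard deviation of the components of `x ∈ ℝ^L`. -/
noncomputable def sdev (L : ℕ) (x : Fin L → ℝ) : ℝ :=
  Real.sqrt ((∑ i, (x i - mea L x) ^ 2) / L)

lemma rlinear_key {L : ℕ} (hL : (L:ℝ) ≠ 0) (x : Fin L → ℝ) (hσ : sdev L x ≠ 0)
    (a : Fin L → ℝ) (α β c : ℝ) (hα : α ≠ 0) :
    mea L x + sdev L x * (β + α * ((∑ j, a j * ((1/α)*((x j - mea L x)/sdev L x - β))) + c)) =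
    (∑ j, (a j + (1 - ∑ k, a k)/L) * x j) + sdev L x * (β*(1 - ∑ k, a k) + α * c) := by
  have h1 : ∀ j, a j * ((1/α)*((x j - mea L x)/sdev L x - β)) =
      (1/(α*sdev L x)) * (a j * x j) - (mea L x/(α*sdev L x) + β/α) * a j := by
    intro j; field_simp; ring
  rw [Finset.sum_congr rfl fun j _ => h1 j, Finset.sum_sub_distrib,
    ← Finset.mul_sum, ← Finset.mul_sum]
  have h2 : ∀ j, (a j + (1 - ∑ k, a k)/L) * x j =
      a j * x j + ((1 - ∑ k, a k)/L) * x j := by intro j; ring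
  rw [Finset.sum_congr rfl fun j _ => h2 j, Finset.sum_add_distrib, ← Finset.mul_sum]
  have hμ : mea L x = (∑ j, x j)/L := rfl
  rw [hμ]
  field_simp
  ring

/-- A linear layer composed with Reversible Instance Normalisation realizes
exactly the functions `x ↦ Ã·x + σ(x)·b` with the rows of `Ã` summing to 1,
on `{x : σ(x) > 0}`. -/
theorem rlinear_class (L T : ℕ) (hL : 2 ≤ L) (hT : 0 < T) :
    (∀ (A : Matrix (Fin T) (Fin L) ℝ) (c : Fin T → ℝ) (α β : ℝ), α ≠ 0 →
      ∃ (At : Matrix (Fin T) (Fin L) ℝ) (b : Fin T → ℝ),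
        (∀ i, ∑ j, At i j = 1) ∧
        ∀ x : Fin L → ℝ, 0 < sdev L x →
          (fun i => mea L x + sdev L x *
              (β + α * (A.mulVec
                (fun j => (1 / α) * ((x j - mea L x) / sdev L x - β)) i + c i))) =
            At.mulVec x + sdev L x • b) ∧
    (∀ (At : Matrix (Fin T) (Fin L) ℝ) (b : Fin T → ℝ), (∀ i, ∑ j, At i j = 1) →
      ∃ (A : Matrix (Fin T) (Fin L) ℝ) (c : Fin T → ℝ) (α β : ℝ), α ≠ 0 ∧
        ∀ x : Fin L → ℝ, 0 < sdev L x →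
          (fun i => mea L x + sdev L x *
              (β + α * (A.mulVec
                (fun j => (1 / α) * ((x j - mea L x) / sdev L x - β)) i + c i))) =
            At.mulVec x + sdev L x • b) := by
  have hL0 : (L:ℝ) ≠ 0 := by
    have : (0:ℝ) < L := by exact_mod_cast lt_of_lt_of_le (by norm_num) hL
    exact ne_of_gt this
  constructor
  · intro A c α β hα
    refine ⟨fun i j => A i j + (1 - ∑ k, A i k)/L, fun i => β*(1 - ∑ k, A i k) + α * c i,
      fun i => ?_, fun x hσ => ?_⟩
    · rw [Finset.sum_add_distrib, Finset.sum_const, Finset.card_fin, nsmul_eq_mul]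
      field_simp
      ring
    · funext i
      simp only [Matrix.mulVec, dotProduct, Pi.add_apply, Pi.smul_apply,
        smul_eq_mul]
      exact rlinear_key hL0 x (ne_of_gt hσ) (fun j => A i j) α β (c i) hα
  · intro At b hrow
    refine ⟨At, b, 1, 0, one_ne_zero, fun x hσ => ?_⟩
    funext i
    simp only [Matrix.mulVec, dotProduct, Pi.add_apply, Pi.smul_apply,
      smul_eq_mul]
    have := rlinear_key hL0 x (ne_of_gt hσ) (fun j => At i j) 1 0 (b i) one_ne_zero
    rw [hrow i] at this
    simpa using this
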